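/- Second Gaussian integral identity with Owen's T function: for all μ ∈ ℝ, σ > 0 and c ∈ (0, σ²), ∫_0^1 (√(σ² − τc)/√τ)·φ(μ/√(σ² − τc)) dτ = √(σ² − c)·φ(μ/√(σ² − c)) + (√(2π)·μσ/√c)·φ(μ/σ)·[Φ((μ/σ)·√(c/(σ² − c))) − 1/2] + (√(2π)/√c)·(σ² − μ²)·T(μ/σ, √(c/(σ² − c))). -/

import Mathlib

open MeasureTheory ProbabilityTheory Real

/-- Standard normal CDF `Φ`. -/
noncomputable def stdNormalCDF (x : ℝ) : ℝ := ((gaussianReal 0 1) (Set.Iic x)).toReal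

/-- Standard normal PDF `φ`. -/
noncomputable def stdNormalPDF (x : ℝ) : ℝ :=
  Real.exp (-x ^ 2 / 2) / Real.sqrt (2 * Real.pi)

/-- Owen's T function `T(x,y) = (1/(2π)) ∫_0^y exp(−x²(1+z²)/2)/(1+z²) dz`. -/
noncomputable def owenT (x y : ℝ) : ℝ :=
  1 / (2 * Real.pi) * ∫ z in (0 : ℝ)..y, Real.exp (-x ^ 2 * (1 + z ^ 2) / 2) / (1 + z ^ 2)

lemma pdf_eq : gaussianPDFReal 0 1 = stdNormalPDF := by
  ext t
  simp [gaussianPDFReal, stdNormalPDF, div_eq_inv_mul, mul_comm]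

lemma pdf_integrable : Integrable stdNormalPDF := pdf_eq ▸ integrable_gaussianPDFReal 0 1

lemma cdf_eq_integral (x : ℝ) : stdNormalCDF x = ∫ t in Set.Iic x, stdNormalPDF t := by
  rw [stdNormalCDF, gaussianReal_apply_eq_integral 0 one_ne_zero,
    ENNReal.toReal_ofReal (integral_nonneg fun t => gaussianPDFReal_nonneg 0 1 t), pdf_eq]

lemma cdf_sub (a b : ℝ) : stdNormalCDF b - stdNormalCDF a = ∫ t in a..b, stdNormalPDF t := by
  rw [cdf_eq_integral, cdf_eq_integral,
    intervalIntegral.integral_Iic_sub_Iic pdf_integrable.integrableOn pdf_integrable.integrableOn]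

lemma cdf_zero : stdNormalCDF 0 = 1 / 2 := by
  have htot : ∫ t, stdNormalPDF t = 1 := pdf_eq ▸ integral_gaussianPDFReal_eq_one 0 one_ne_zero
  have hsplit : ∫ t, stdNormalPDF t
      = (∫ t in Set.Iic (0:ℝ), stdNormalPDF t) + ∫ t in Set.Ioi (0:ℝ), stdNormalPDF t := by
    rw [← setIntegral_union (by simp [Set.disjoint_left]) measurableSet_Ioi
      pdf_integrable.integrableOn pdf_integrable.integrableOn]
    simp [Set.Iic_union_Ioi]
  have hsym : ∫ t in Set.Ioi (0:ℝ), stdNormalPDF t = ∫ t in Set.Iic (0:ℝ), stdNormalPDF t := by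
    calc ∫ t in Set.Ioi (0:ℝ), stdNormalPDF t
        = ∫ t in Set.Ioi (0:ℝ), stdNormalPDF (-t) := by simp [stdNormalPDF]
      _ = ∫ t in Set.Iic (-(0:ℝ)), stdNormalPDF t := integral_comp_neg_Ioi _ _
      _ = ∫ t in Set.Iic (0:ℝ), stdNormalPDF t := by norm_num
  rw [cdf_eq_integral]
  rw [hsplit, hsym] at htot
  linarith

-- K lemma
lemma K_lemma {x : ℝ} (hx : x ≠ 0) (w : ℝ) :
    ∫ z in (0:ℝ)..w, Real.exp (-x ^ 2 * z ^ 2 / 2)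
      = Real.sqrt (2 * π) / x * (stdNormalCDF (x * w) - 1 / 2) := by
  have h2π : (0:ℝ) < Real.sqrt (2 * π) := Real.sqrt_pos.2 (by positivity)
  have h1 : ∀ z : ℝ, Real.exp (-x ^ 2 * z ^ 2 / 2)
      = Real.sqrt (2 * π) * stdNormalPDF (x * z) := by
    intro z
    rw [stdNormalPDF, mul_div_assoc', mul_div_cancel_left₀ _ h2π.ne', Real.exp_eq_exp]
    ring
  simp_rw [h1]
  rw [intervalIntegral.integral_const_mul, intervalIntegral.integral_comp_mul_left _ hx,
    ← cdf_sub]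
  rw [mul_zero, cdf_zero]
  rw [smul_eq_mul]
  ring

-- FTC lemma
lemma FTC_lemma (x w : ℝ) :
    ∫ z in (0:ℝ)..w, Real.exp (-x ^ 2 * (1 + z ^ 2) / 2) / (1 + z ^ 2) ^ 2
      = w / (2 * (1 + w ^ 2)) * Real.exp (-x ^ 2 * (1 + w ^ 2) / 2)
        + (1 - x ^ 2) / 2 * (∫ z in (0:ℝ)..w, Real.exp (-x ^ 2 * (1 + z ^ 2) / 2) / (1 + z ^ 2))
        + x ^ 2 / 2 * Real.exp (-x ^ 2 / 2) * ∫ z in (0:ℝ)..w, Real.exp (-x ^ 2 * z ^ 2 / 2) := by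
  set G : ℝ → ℝ := fun z => z / (2 * (1 + z ^ 2)) * Real.exp (-x ^ 2 * (1 + z ^ 2) / 2) with hG
  have hu : ∀ z : ℝ, (0:ℝ) < 1 + z ^ 2 := fun z => by positivity
  have hder : ∀ z : ℝ, HasDerivAt G
      (Real.exp (-x ^ 2 * (1 + z ^ 2) / 2) / (1 + z ^ 2) ^ 2
        - (1 - x ^ 2) / 2 * (Real.exp (-x ^ 2 * (1 + z ^ 2) / 2) / (1 + z ^ 2))
        - x ^ 2 / 2 * Real.exp (-x ^ 2 * (1 + z ^ 2) / 2)) z := by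
    intro z
    have h1 : HasDerivAt (fun z : ℝ => z / (2 * (1 + z ^ 2)))
        ((2 * (1 + z ^ 2) - z * (4 * z)) / (2 * (1 + z ^ 2)) ^ 2) z := by
      have := (hasDerivAt_id z).div
        (((hasDerivAt_pow 2 z).const_add 1).const_mul 2) (by positivity)
      refine this.congr_deriv ?_
      simp only [id_eq]
      ring
    have h2 : HasDerivAt (fun z : ℝ => Real.exp (-x ^ 2 * (1 + z ^ 2) / 2))
        (Real.exp (-x ^ 2 * (1 + z ^ 2) / 2) * (-x ^ 2 * (2 * z) / 2)) z := by
      have hinner : HasDerivAt (fun z : ℝ => -x ^ 2 * (1 + z ^ 2) / 2)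
          (-x ^ 2 * (2 * z) / 2) z := by
        have := (((hasDerivAt_pow 2 z).const_add 1).const_mul (-x ^ 2)).div_const 2
        simpa using this
      exact (Real.hasDerivAt_exp _).comp z hinner
    have := h1.mul h2
    refine this.congr_deriv ?_
    have h := (hu z).ne'
    field_simp
    ring
  have hcont : Continuous fun z : ℝ => Real.exp (-x ^ 2 * (1 + z ^ 2) / 2) :=
    ((continuous_const.mul (continuous_const.add (continuous_pow 2))).div_const 2).rexp
  have hu' : ∀ z : ℝ, (1 + z ^ 2 : ℝ) ≠ 0 := fun z => (hu z).ne'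
  have hc1 : Continuous fun z : ℝ => Real.exp (-x ^ 2 * (1 + z ^ 2) / 2) / (1 + z ^ 2) ^ 2 :=
    hcont.div (continuous_const.add (continuous_pow 2) |>.pow 2) fun z => pow_ne_zero 2 (hu' z)
  have hc2 : Continuous fun z : ℝ => Real.exp (-x ^ 2 * (1 + z ^ 2) / 2) / (1 + z ^ 2) :=
    hcont.div (continuous_const.add (continuous_pow 2)) hu'
  have key := intervalIntegral.integral_eq_sub_of_hasDerivAt
    (f := G) (a := (0:ℝ)) (b := w) (fun z _ => hder z)
    (((hc1.sub (continuous_const.mul hc2)).sub (continuous_const.mul hcont)).intervalIntegrable 0 w)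
  have hG0 : G 0 = 0 := by simp [hG]
  rw [hG0, sub_zero] at key
  rw [intervalIntegral.integral_sub
      (f := fun z => Real.exp (-x ^ 2 * (1 + z ^ 2) / 2) / (1 + z ^ 2) ^ 2
        - (1 - x ^ 2) / 2 * (Real.exp (-x ^ 2 * (1 + z ^ 2) / 2) / (1 + z ^ 2)))
      (g := fun z => x ^ 2 / 2 * Real.exp (-x ^ 2 * (1 + z ^ 2) / 2))
      ((hc1.sub (continuous_const.mul hc2)).intervalIntegrable 0 w)
      ((continuous_const.mul hcont).intervalIntegrable 0 w),
    intervalIntegral.integral_sub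
      (f := fun z => Real.exp (-x ^ 2 * (1 + z ^ 2) / 2) / (1 + z ^ 2) ^ 2)
      (g := fun z => (1 - x ^ 2) / 2 * (Real.exp (-x ^ 2 * (1 + z ^ 2) / 2) / (1 + z ^ 2)))
      (hc1.intervalIntegrable 0 w)
      ((continuous_const.mul hc2).intervalIntegrable 0 w),
    intervalIntegral.integral_const_mul, intervalIntegral.integral_const_mul] at key
  have hsplit : ∫ z in (0:ℝ)..w, Real.exp (-x ^ 2 * (1 + z ^ 2) / 2)
      = Real.exp (-x ^ 2 / 2) * ∫ z in (0:ℝ)..w, Real.exp (-x ^ 2 * z ^ 2 / 2) := by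
    rw [← intervalIntegral.integral_const_mul]
    congr 1
    ext z
    rw [← Real.exp_add, Real.exp_eq_exp]
    ring
  rw [hsplit] at key
  have hGw : G w = w / (2 * (1 + w ^ 2)) * Real.exp (-x ^ 2 * (1 + w ^ 2) / 2) := rfl
  linarith [key]

lemma sub_lemma (μ σ c : ℝ) (hσ : 0 < σ) (hc0 : 0 < c) (hcσ : c < σ ^ 2) :
    (∫ τ in (0 : ℝ)..1,
        Real.sqrt (σ ^ 2 - τ * c) / Real.sqrt τ * stdNormalPDF (μ / Real.sqrt (σ ^ 2 - τ * c)))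
      = ∫ z in (0:ℝ)..Real.sqrt (c / (σ ^ 2 - c)),
          2 * σ ^ 2 / (Real.sqrt c * Real.sqrt (2 * π))
            * (Real.exp (-(μ / σ) ^ 2 * (1 + z ^ 2) / 2) / (1 + z ^ 2) ^ 2) := by
  have hσc : 0 < σ ^ 2 - c := by linarith
  set z₁ := Real.sqrt (c / (σ ^ 2 - c)) with hz₁def
  have hz₁ : 0 < z₁ := Real.sqrt_pos.2 (by positivity)
  have hz₁sq : z₁ ^ 2 = c / (σ ^ 2 - c) := Real.sq_sqrt (by positivity)
  set F : ℝ → ℝ := fun τ =>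
    Real.sqrt (σ ^ 2 - τ * c) / Real.sqrt τ * stdNormalPDF (μ / Real.sqrt (σ ^ 2 - τ * c)) with hF
  set g : ℝ → ℝ := fun z => σ ^ 2 / c * (z ^ 2 / (1 + z ^ 2)) with hg
  have hu : ∀ z : ℝ, (0:ℝ) < 1 + z ^ 2 := fun z => by positivity
  have hgd : ∀ z : ℝ, HasDerivAt g (σ ^ 2 / c * (2 * z / (1 + z ^ 2) ^ 2)) z := by
    intro z
    have h1 : HasDerivAt (fun z : ℝ => z ^ 2 / (1 + z ^ 2))
        ((2 * z * (1 + z ^ 2) - z ^ 2 * (2 * z)) / (1 + z ^ 2) ^ 2) z := by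
      have := (hasDerivAt_pow 2 z).div ((hasDerivAt_pow 2 z).const_add 1) (hu z).ne'
      refine this.congr_deriv ?_
      simp
    have := h1.const_mul (σ ^ 2 / c)
    refine this.congr_deriv ?_
    have := (hu z).ne'
    field_simp
    ring
  have hg0 : g 0 = 0 := by simp [hg]
  have hgz₁ : g z₁ = 1 := by
    rw [hg]
    simp only
    rw [hz₁sq]
    field_simp
    ring
  have hmono : ∀ a b : ℝ, 0 ≤ a → a < b → g a < g b := by
    intro a b ha hab
    rw [hg]
    simp only
    have h1 : (0:ℝ) < σ ^ 2 / c := by positivity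
    refine mul_lt_mul_of_pos_left ?_ h1
    rw [div_lt_div_iff₀ (hu a) (hu b)]
    nlinarith
  have himage : g '' Set.Ioo 0 z₁ = Set.Ioo 0 1 := by
    apply Set.Subset.antisymm
    · rintro _ ⟨z, hz, rfl⟩
      exact ⟨hg0 ▸ hmono 0 z le_rfl hz.1, hgz₁ ▸ hmono z z₁ hz.1.le hz.2⟩
    · have hcont : ContinuousOn g (Set.Icc 0 z₁) := by
        apply Continuous.continuousOn
        exact continuous_const.mul ((continuous_pow 2).div
          (continuous_const.add (continuous_pow 2)) fun z => (hu z).ne')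
      have := intermediate_value_Ioo hz₁.le hcont
      rwa [hg0, hgz₁] at this
  have hsm : StrictMonoOn g (Set.Ioo 0 z₁) := fun a ha b hb hab => hmono a b ha.1.le hab
  have hinj : Set.InjOn g (Set.Ioo 0 z₁) := hsm.injOn
  have key : ∫ τ in Set.Ioo (0:ℝ) 1, F τ = ∫ z in Set.Ioo 0 z₁, |σ ^ 2 / c * (2 * z / (1 + z ^ 2) ^ 2)| • F (g z) := by
    rw [← himage]
    exact integral_image_eq_integral_abs_deriv_smul measurableSet_Ioo
      (fun z _ => (hgd z).hasDerivWithinAt) hinj F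
  have hpt : ∀ z ∈ Set.Ioo (0:ℝ) z₁,
      |σ ^ 2 / c * (2 * z / (1 + z ^ 2) ^ 2)| • F (g z)
        = 2 * σ ^ 2 / (Real.sqrt c * Real.sqrt (2 * π))
            * (Real.exp (-(μ / σ) ^ 2 * (1 + z ^ 2) / 2) / (1 + z ^ 2) ^ 2) := by
    rintro z ⟨hz0, -⟩
    have huz := hu z
    have habs : |σ ^ 2 / c * (2 * z / (1 + z ^ 2) ^ 2)| = σ ^ 2 / c * (2 * z / (1 + z ^ 2) ^ 2) :=
      abs_of_pos (by positivity)
    have hA : σ ^ 2 - g z * c = σ ^ 2 / (1 + z ^ 2) := by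
      rw [hg]; field_simp; ring
    have hB : Real.sqrt (σ ^ 2 / (1 + z ^ 2)) = σ / Real.sqrt (1 + z ^ 2) := by
      rw [Real.sqrt_div (sq_nonneg σ), Real.sqrt_sq hσ.le]
    have hgz' : g z = (σ * z) ^ 2 / (c * (1 + z ^ 2)) := by
      rw [hg]; field_simp
    have hC : Real.sqrt (g z) = σ * z / (Real.sqrt c * Real.sqrt (1 + z ^ 2)) := by
      rw [hgz', Real.sqrt_div (sq_nonneg _), Real.sqrt_sq (by positivity),
        Real.sqrt_mul hc0.le]
    have hs2 : Real.sqrt (1 + z ^ 2) ^ 2 = 1 + z ^ 2 := Real.sq_sqrt huz.le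
    have ht2 : Real.sqrt c ^ 2 = c := Real.sq_sqrt hc0.le
    have hs0 : (0:ℝ) < Real.sqrt (1 + z ^ 2) := Real.sqrt_pos.2 huz
    have ht0 : (0:ℝ) < Real.sqrt c := Real.sqrt_pos.2 hc0
    have h2π : (0:ℝ) < Real.sqrt (2 * π) := Real.sqrt_pos.2 (by positivity)
    have harg : μ / (σ / Real.sqrt (1 + z ^ 2)) = μ * Real.sqrt (1 + z ^ 2) / σ := by
      field_simp
    have hexp : Real.exp (-(μ * Real.sqrt (1 + z ^ 2) / σ) ^ 2 / 2)
        = Real.exp (-(μ / σ) ^ 2 * (1 + z ^ 2) / 2) := by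
      rw [Real.exp_eq_exp, div_pow, mul_pow, hs2, div_pow]
      field_simp
    rw [smul_eq_mul, habs, hF]
    simp only
    rw [hA, hB, hC, harg, stdNormalPDF, hexp]
    set t := Real.sqrt c with htdef
    clear_value t
    rw [← ht2]
    field_simp
  rw [intervalIntegral.integral_of_le zero_le_one,
    intervalIntegral.integral_of_le hz₁.le, integral_Ioc_eq_integral_Ioo,
    integral_Ioc_eq_integral_Ioo, key]
  exact setIntegral_congr_fun measurableSet_Ioo hpt

/-- **Second Gaussian integral identity with Owen's T function** (Lemma G.2): for all
`μ ∈ ℝ`, `σ > 0` and `c ∈ (0, σ²)`,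
`∫_0^1 (√(σ²−τc)/√τ) φ(μ/√(σ²−τc)) dτ = √(σ²−c) φ(μ/√(σ²−c))
  + (√(2π)μσ/√c) φ(μ/σ) [Φ((μ/σ)√(c/(σ²−c))) − 1/2]
  + (√(2π)/√c)(σ² − μ²) T(μ/σ, √(c/(σ²−c)))`. -/
theorem gaussian_integral_owenT_second
    (μ σ c : ℝ) (hσ : 0 < σ) (hc : c ∈ Set.Ioo 0 (σ ^ 2)) :
    (∫ τ in (0 : ℝ)..1,
        Real.sqrt (σ ^ 2 - τ * c) / Real.sqrt τ * stdNormalPDF (μ / Real.sqrt (σ ^ 2 - τ * c))) =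
      Real.sqrt (σ ^ 2 - c) * stdNormalPDF (μ / Real.sqrt (σ ^ 2 - c))
        + Real.sqrt (2 * Real.pi) * μ * σ / Real.sqrt c * stdNormalPDF (μ / σ)
            * (stdNormalCDF (μ / σ * Real.sqrt (c / (σ ^ 2 - c))) - 1 / 2)
        + Real.sqrt (2 * Real.pi) / Real.sqrt c * (σ ^ 2 - μ ^ 2)
            * owenT (μ / σ) (Real.sqrt (c / (σ ^ 2 - c))) := by
  obtain ⟨hc0, hcσ⟩ := hc
  have hσc : 0 < σ ^ 2 - c := by linarith
  set x : ℝ := μ / σ with hxdef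
  set z₁ : ℝ := Real.sqrt (c / (σ ^ 2 - c)) with hz₁def
  have hz₁sq : z₁ ^ 2 = c / (σ ^ 2 - c) := Real.sq_sqrt (by positivity)
  rw [sub_lemma μ σ c hσ hc0 hcσ, intervalIntegral.integral_const_mul, FTC_lemma]
  -- Owen T rewrite
  have hO : (∫ z in (0:ℝ)..z₁, Real.exp (-x ^ 2 * (1 + z ^ 2) / 2) / (1 + z ^ 2))
      = 2 * π * owenT x z₁ := by
    rw [owenT]
    have : (2 * π) ≠ 0 := by positivity
    field_simp
  -- K rewrite (valid also for x = 0)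
  have hK : x ^ 2 / 2 * Real.exp (-x ^ 2 / 2) * (∫ z in (0:ℝ)..z₁, Real.exp (-x ^ 2 * z ^ 2 / 2))
      = Real.sqrt (2 * π) / 2 * x * Real.exp (-x ^ 2 / 2) * (stdNormalCDF (x * z₁) - 1 / 2) := by
    rcases eq_or_ne x 0 with hx | hx
    · rw [hx, zero_mul, cdf_zero]
      ring
    · rw [K_lemma hx]
      field_simp
  rw [hO, hK]
  -- now pure algebra
  have hs2 : Real.sqrt (σ ^ 2 - c) ^ 2 = σ ^ 2 - c := Real.sq_sqrt hσc.le
  have ht2 : Real.sqrt c ^ 2 = c := Real.sq_sqrt hc0.le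
  have hp2 : Real.sqrt (2 * π) ^ 2 = 2 * π := Real.sq_sqrt (by positivity)
  have hs0 : 0 < Real.sqrt (σ ^ 2 - c) := Real.sqrt_pos.2 hσc
  have ht0 : 0 < Real.sqrt c := Real.sqrt_pos.2 hc0
  have hp0 : 0 < Real.sqrt (2 * π) := Real.sqrt_pos.2 (by positivity)
  set s : ℝ := Real.sqrt (σ ^ 2 - c) with hsdef
  set t : ℝ := Real.sqrt c with htdef
  set p : ℝ := Real.sqrt (2 * π) with hpdef
  have hπ : π = p ^ 2 / 2 := by rw [hp2]; ring
  have hz₁eq : z₁ = t / s := by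
    rw [hz₁def, Real.sqrt_div hc0.le, hsdef, htdef]
  have hone : 1 + z₁ ^ 2 = σ ^ 2 / s ^ 2 := by
    rw [hz₁sq, hs2]
    field_simp
    ring
  have hE1 : Real.exp (-x ^ 2 * (1 + z₁ ^ 2) / 2)
      = Real.exp (-(μ / s) ^ 2 / 2) := by
    rw [Real.exp_eq_exp, hz₁sq, hxdef, div_pow, div_pow, hs2]
    field_simp
    ring
  rw [hE1, stdNormalPDF, stdNormalPDF, mul_add, mul_add]
  have T1 : 2 * σ ^ 2 / (t * p) * (z₁ / (2 * (1 + z₁ ^ 2)) * Real.exp (-(μ / s) ^ 2 / 2))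
      = s * (Real.exp (-(μ / s) ^ 2 / 2) / p) := by
    rw [hone, hz₁eq]
    field_simp
  have T2 : 2 * σ ^ 2 / (t * p) * ((1 - x ^ 2) / 2 * (2 * π * owenT x z₁))
      = p / t * (σ ^ 2 - μ ^ 2) * owenT x z₁ := by
    rw [hπ, hxdef]
    field_simp
  have T3 : 2 * σ ^ 2 / (t * p) * (p / 2 * x * Real.exp (-x ^ 2 / 2) * (stdNormalCDF (x * z₁) - 1 / 2))
      = p * μ * σ / t * (Real.exp (-x ^ 2 / 2) / p) * (stdNormalCDF (x * z₁) - 1 / 2) := by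
    rw [hxdef]
    field_simp
  rw [T1, T2, T3]
  rw [hxdef]
  rw [← hpdef]
  ring
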